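/- arXiv:2603.05499 — 3 statements merged into one kernel-verified Lean document; each statement's English description precedes it below -/
import Mathlib

section
/- Let ρ₁ = |ψ⟩⟨ψ| be a pure density matrix and ρ₂ a density matrix on ℂ^n. Then the trace distance (1/2)‖ρ₁ − ρ₂‖₁ equals the largest eigenvalue λ₊ of ρ₁ − ρ₂ (and λ₊ ≥ 0). -/
open Matrix BigOperators ComplexOrder

lemma auxq {n : ℕ} (Δ : Matrix (Fin n) (Fin n) ℂ) (vi vj : Fin n → ℂ) (li lj : ℝ) (c d : ℂ)
    (hii : star vi ⬝ᵥ vi = 1) (hjj : star vj ⬝ᵥ vj = 1)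
    (hij : star vi ⬝ᵥ vj = 0) (hji : star vj ⬝ᵥ vi = 0)
    (hvi : Δ *ᵥ vi = (li : ℂ) • vi) (hvj : Δ *ᵥ vj = (lj : ℂ) • vj) :
    star (d • vi - c • vj) ⬝ᵥ (Δ *ᵥ (d • vi - c • vj)) =
      ((Complex.normSq d * li + Complex.normSq c * lj : ℝ) : ℂ) := by
  have hd2 : (starRingEnd ℂ) d * d = (Complex.normSq d : ℂ) := by
    rw [mul_comm, Complex.mul_conj]
  have hc2 : (starRingEnd ℂ) c * c = (Complex.normSq c : ℂ) := by
    rw [mul_comm, Complex.mul_conj]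
  simp only [Matrix.mulVec_sub, Matrix.mulVec_smul, hvi, hvj, star_sub, star_smul,
    sub_dotProduct, dotProduct_sub, smul_dotProduct, dotProduct_smul, smul_smul,
    smul_eq_mul, hii, hjj, hij, hji, mul_one, mul_zero, sub_zero, zero_sub, Complex.star_def]
  push_cast
  linear_combination (li : ℂ) * hd2 + (lj : ℂ) * hc2

theorem stmt4 {n : ℕ} (ρ₂ : Matrix (Fin n) (Fin n) ℂ)
    (hρ₂ : ρ₂.PosSemidef) (htr : ρ₂.trace = 1)
    (ψ : Fin n → ℂ) (hψ : star ψ ⬝ᵥ ψ = 1)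
    (hΔ : (Matrix.vecMulVec ψ (star ψ) - ρ₂).IsHermitian) :
    (1 / 2) * ∑ i, |hΔ.eigenvalues i| = ⨆ i, hΔ.eigenvalues i ∧
      0 ≤ ⨆ i, hΔ.eigenvalues i := by
  set Δ := Matrix.vecMulVec ψ (star ψ) - ρ₂ with hΔdef
  set ev := hΔ.eigenvalues with hev
  set v : Fin n → Fin n → ℂ := fun i => ⇑(hΔ.eigenvectorBasis i) with hv
  -- orthonormality
  have hortho : ∀ i j, star (v i) ⬝ᵥ v j = if i = j then 1 else 0 := by
    intro i j
    have := orthonormal_iff_ite.mp hΔ.eigenvectorBasis.orthonormal i j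
    rw [dotProduct_comm]
    simpa [EuclideanSpace.inner_eq_star_dotProduct] using this
  have heig : ∀ i, Δ *ᵥ v i = (ev i : ℂ) • v i := fun i => by
    simpa using hΔ.mulVec_eigenvectorBasis i
  -- trace of Δ is 0
  have htrΔ : ∑ i, ev i = 0 := by
    have h1 : Δ.trace = ∑ i, (ev i : ℂ) := by
      rw [hΔ.spectral_theorem, Unitary.conjStarAlgAut_apply, Matrix.trace_mul_cycle]
      simp [Matrix.trace_diagonal, mul_comm, hev]
    have h2 : Δ.trace = 0 := by
      rw [hΔdef, Matrix.trace_sub, htr]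
      have : (Matrix.vecMulVec ψ (star ψ)).trace = star ψ ⬝ᵥ ψ := by
        simp [Matrix.trace, Matrix.diag, Matrix.vecMulVec_apply, dotProduct, mul_comm]
      rw [this, hψ, sub_self]
    have : (↑(∑ i, ev i) : ℂ) = 0 := by push_cast; rw [← h1, h2]
    exact_mod_cast this
  -- key: quadratic form nonpositive on ψ's orthogonal complement
  have hkey : ∀ x : Fin n → ℂ, star ψ ⬝ᵥ x = 0 → star x ⬝ᵥ (Δ *ᵥ x) ≤ 0 := by
    intro x hx
    have h1 : (Matrix.vecMulVec ψ (star ψ)) *ᵥ x = (star ψ ⬝ᵥ x) • ψ := by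
      ext i
      simp only [Matrix.mulVec, Matrix.vecMulVec_apply, dotProduct, Pi.smul_apply, smul_eq_mul]
      rw [Finset.sum_mul]
      exact Finset.sum_congr rfl fun k _ => by ring
    rw [hΔdef, Matrix.sub_mulVec, dotProduct_sub, h1, hx, zero_smul, dotProduct_zero, zero_sub,
      neg_nonpos]
    exact hρ₂.dotProduct_mulVec_nonneg x
  -- at most one positive eigenvalue
  have honepos : ∀ i j, i ≠ j → 0 < ev i → 0 < ev j → False := by
    intro i j hij hi hj
    have hii : star (v i) ⬝ᵥ v i = 1 := by simpa using hortho i i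
    have hjj : star (v j) ⬝ᵥ v j = 1 := by simpa using hortho j j
    have hij' : star (v i) ⬝ᵥ v j = 0 := by simpa [hij] using hortho i j
    have hji' : star (v j) ⬝ᵥ v i = 0 := by simpa [hij.symm] using hortho j i
    set c := star ψ ⬝ᵥ v i with hc
    set d := star ψ ⬝ᵥ v j with hd
    by_cases hc0 : c = 0
    · have hle := hkey (v i) hc0
      rw [heig i, dotProduct_smul, hii, smul_eq_mul, mul_one] at hle
      have : ev i ≤ 0 := by exact_mod_cast hle
      exact absurd this hi.not_ge
    · have hxo : star ψ ⬝ᵥ (d • v i - c • v j) = 0 := by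
        rw [dotProduct_sub, dotProduct_smul, dotProduct_smul, ← hc, ← hd,
          smul_eq_mul, smul_eq_mul, mul_comm, sub_self]
      have hle := hkey _ hxo
      rw [auxq Δ (v i) (v j) (ev i) (ev j) c d hii hjj hij' hji' (heig i) (heig j)] at hle
      have hlt : (0:ℝ) < Complex.normSq d * ev i + Complex.normSq c * ev j := by
        have h1 : 0 ≤ Complex.normSq d * ev i := mul_nonneg (Complex.normSq_nonneg d) hi.le
        have h2 : 0 < Complex.normSq c * ev j := mul_pos (Complex.normSq_pos.mpr hc0) hj
        linarith
      have hlt' : (0:ℂ) < ((Complex.normSq d * ev i + Complex.normSq c * ev j : ℝ) : ℂ) := by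
        exact_mod_cast hlt
      exact absurd hle hlt'.not_ge
  -- n > 0
  have hn : 0 < n := by
    rcases Nat.eq_zero_or_pos n with h | h
    · subst h; simp [dotProduct] at hψ
    · exact h
  haveI : Nonempty (Fin n) := ⟨⟨0, hn⟩⟩
  -- argmax
  obtain ⟨i₀, hi₀⟩ := Finite.exists_max ev
  have hsup : (⨆ i, ev i) = ev i₀ :=
    le_antisymm (ciSup_le fun j => hi₀ j) (le_ciSup (Finite.bddAbove_range ev) i₀)
  have hneg : ∀ j, j ≠ i₀ → ev j ≤ 0 := by
    intro j hj
    by_contra h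
    push_neg at h
    exact honepos j i₀ hj h (lt_of_lt_of_le h (hi₀ j))
  have hpos : 0 ≤ ev i₀ := by
    by_contra h
    push_neg at h
    have : ∑ i, ev i < 0 := by
      apply Finset.sum_neg
      · intro i _
        rcases eq_or_ne i i₀ with rfl | hne
        · exact h
        · exact lt_of_le_of_lt (hi₀ i) h
      · exact ⟨i₀, Finset.mem_univ i₀⟩
    linarith [htrΔ]
  have hsum : ∑ i, |ev i| = 2 * ev i₀ := by
    rw [← Finset.add_sum_erase _ _ (Finset.mem_univ i₀), abs_of_nonneg hpos]
    have h1 : ∑ j ∈ Finset.univ.erase i₀, |ev j| = -∑ j ∈ Finset.univ.erase i₀, ev j := by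
      rw [← Finset.sum_neg_distrib]
      exact Finset.sum_congr rfl fun j hj =>
        abs_of_nonpos (hneg j (Finset.mem_erase.mp hj).1)
    have h2 : ∑ j ∈ Finset.univ.erase i₀, ev j = -ev i₀ := by
      have := Finset.add_sum_erase _ ev (Finset.mem_univ i₀)
      linarith [htrΔ, this]
    rw [h1, h2]; ring
  constructor
  · rw [hsup, hsum]; ring
  · rw [hsup]; exact hpos
end

section
/- Let ρ be a density matrix and ψ a unit vector in ℂ^n. Define vectors v_ℓ = (|ψ⟩⟨ψ| − ρ)^ℓ ψ for ℓ ≥ 0. Then for each ℓ there exist real coefficients c_{ℓ,0}, …, c_{ℓ,ℓ} such that v_ℓ = Σ_{k=0}^{ℓ} c_{ℓ,k} ρ^k ψ, satisfying the recursion c_{0,0} = 1, c_{ℓ,0} = Σ_{k=0}^{ℓ−1} c_{ℓ−1,k} ⟨ψ, ρ^k ψ⟩, and c_{ℓ,j} = −c_{ℓ−1,j−1} for 1 ≤ j ≤ ℓ. -/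
open Matrix BigOperators ComplexOrder

private def coef (r : ℕ → ℝ) : ℕ → ℕ → ℝ
  | 0, 0 => 1
  | 0, _ + 1 => 0
  | (ℓ + 1), 0 => ∑ k ∈ Finset.range (ℓ + 1), coef r ℓ k * r k
  | (ℓ + 1), (j + 1) => - coef r ℓ j

theorem stmt7 {n : ℕ} (ρ : Matrix (Fin n) (Fin n) ℂ)
    (hρ : ρ.PosSemidef) (htr : ρ.trace = 1)
    (ψ : Fin n → ℂ) (hψ : star ψ ⬝ᵥ ψ = 1) :
    ∃ c : ℕ → ℕ → ℝ,
      c 0 0 = 1 ∧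
      (∀ ℓ, c (ℓ + 1) 0 =
        ∑ k ∈ Finset.range (ℓ + 1), c ℓ k * (star ψ ⬝ᵥ (ρ ^ k).mulVec ψ).re) ∧
      (∀ ℓ j, j ≤ ℓ → c (ℓ + 1) (j + 1) = -c ℓ j) ∧
      (∀ ℓ, ((Matrix.vecMulVec ψ (star ψ) - ρ) ^ ℓ).mulVec ψ =
        ∑ k ∈ Finset.range (ℓ + 1), (c ℓ k : ℂ) • (ρ ^ k).mulVec ψ) := by
  set r : ℕ → ℝ := fun k => (star ψ ⬝ᵥ (ρ ^ k).mulVec ψ).re with hr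
  have hreal : ∀ k, (star ψ ⬝ᵥ (ρ ^ k).mulVec ψ) = (r k : ℂ) := by
    intro k
    have h := (hρ.pow k).dotProduct_mulVec_nonneg ψ
    have him : (star ψ ⬝ᵥ (ρ ^ k).mulVec ψ).im = 0 := by
      have := (Complex.le_def.mp h).2
      simpa using this.symm
    exact (Complex.ext (by simp [hr]) (by simpa using him.symm)).symm
  refine ⟨coef r, rfl, fun ℓ => rfl, fun ℓ j _ => rfl, ?_⟩
  intro ℓ
  induction ℓ with
  | zero => simp [coef]
  | succ ℓ ih =>
    have hM : ((Matrix.vecMulVec ψ (star ψ) - ρ) ^ (ℓ + 1)).mulVec ψ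
        = (Matrix.vecMulVec ψ (star ψ) - ρ).mulVec
            (((Matrix.vecMulVec ψ (star ψ) - ρ) ^ ℓ).mulVec ψ) := by
      rw [pow_succ', Matrix.mulVec_mulVec]
    rw [hM, ih]
    have hmv : ∀ (x : Fin n → ℂ),
        (Matrix.vecMulVec ψ (star ψ)).mulVec x = (star ψ ⬝ᵥ x) • ψ := by
      intro x
      funext i
      simp [Matrix.mulVec, Matrix.vecMulVec_apply, dotProduct, Finset.mul_sum,
        mul_assoc, mul_comm, mul_left_comm]
    have step : ∀ k, (Matrix.vecMulVec ψ (star ψ) - ρ).mulVec ((ρ ^ k).mulVec ψ)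
        = (r k : ℂ) • ψ - (ρ ^ (k + 1)).mulVec ψ := by
      intro k
      rw [Matrix.sub_mulVec, hmv, Matrix.mulVec_mulVec, ← pow_succ', hreal]
    have msum : ∀ (s : Finset ℕ) (f : ℕ → Fin n → ℂ),
        (Matrix.vecMulVec ψ (star ψ) - ρ).mulVec (∑ k ∈ s, f k)
        = ∑ k ∈ s, (Matrix.vecMulVec ψ (star ψ) - ρ).mulVec (f k) := by
      intro s f
      have := map_sum (Matrix.vecMulVec ψ (star ψ) - ρ).mulVecLin f s
      simpa only [Matrix.mulVecLin_apply] using this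
    rw [msum]
    simp only [Matrix.mulVec_smul, step, smul_sub]
    rw [Finset.sum_sub_distrib, Finset.sum_range_succ' (fun k => ((coef r (ℓ+1) k : ℝ) : ℂ) • (ρ ^ k).mulVec ψ)]
    have h0 : ((coef r (ℓ+1) 0 : ℝ) : ℂ) • (ρ ^ 0).mulVec ψ
        = ∑ k ∈ Finset.range (ℓ + 1), ((coef r ℓ k : ℝ) : ℂ) • ((r k : ℂ) • ψ) := by
      simp only [coef, pow_zero, Matrix.one_mulVec, smul_smul]
      push_cast
      rw [Finset.sum_smul]
    rw [← h0]
    have h1 : ∀ k ∈ Finset.range (ℓ + 1),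
        ((coef r (ℓ+1) (k+1) : ℝ) : ℂ) • (ρ ^ (k+1)).mulVec ψ
        = -(((coef r ℓ k : ℝ) : ℂ) • (ρ ^ (k+1)).mulVec ψ) := by
      intro k _
      simp [coef, neg_smul]
    rw [Finset.sum_congr rfl h1, Finset.sum_neg_distrib]
    ring_nf
end

section
/- Let ρ₁ = |ψ⟩⟨ψ| be pure and ρ₂ a density matrix, with largest eigenvalue λ₊ of ρ₁ − ρ₂ and corresponding unit eigenvector v. Then for the two-outcome POVM {|v⟩⟨v|, I − |v⟩⟨v|}, the bias Tr(|v⟩⟨v|(ρ₁ − ρ₂)) equals λ₊ = (1/2)‖ρ₁ − ρ₂‖₁; i.e., this measurement achieves the Holevo–Helstrom optimum. -/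
open Matrix BigOperators ComplexOrder

lemma trace_vecMulVec_mul {n : ℕ} (a b : Fin n → ℂ) (M : Matrix (Fin n) (Fin n) ℂ) :
    (Matrix.vecMulVec a b * M).trace = b ⬝ᵥ (M *ᵥ a) := by
  simp only [Matrix.trace, Matrix.diag, Matrix.mul_apply, Matrix.vecMulVec_apply,
    Matrix.mulVec, dotProduct]
  rw [Finset.sum_comm]
  refine Finset.sum_congr rfl fun j _ => ?_
  rw [Finset.mul_sum]
  exact Finset.sum_congr rfl fun i _ => by ring

lemma vecMulVec_mulVec' {n : ℕ} (a b w : Fin n → ℂ) :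
    Matrix.vecMulVec a b *ᵥ w = (b ⬝ᵥ w) • a := by
  funext j
  simp only [Matrix.mulVec, Matrix.vecMulVec_apply, dotProduct, Pi.smul_apply,
    smul_eq_mul]
  rw [Finset.sum_mul]
  exact Finset.sum_congr rfl fun i _ => by ring

lemma star_dot {n : ℕ} (x y : Fin n → ℂ) : star (star x ⬝ᵥ y) = star y ⬝ᵥ x := by
  simp only [dotProduct, star_sum, star_mul', star_star, Pi.star_apply]
  exact Finset.sum_congr rfl fun i _ => by ring

lemma abs_eq_two_max_sub (x : ℝ) : |x| = 2 * max x 0 - x := by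
  rcases le_or_gt 0 x with h | h
  · rw [abs_of_nonneg h, max_eq_left h]; ring
  · rw [abs_of_neg h, max_eq_right h.le]; ring

theorem stmt11 {n : ℕ} (ρ₂ : Matrix (Fin n) (Fin n) ℂ)
    (hρ₂ : ρ₂.PosSemidef) (htr : ρ₂.trace = 1)
    (ψ : Fin n → ℂ) (hψ : star ψ ⬝ᵥ ψ = 1)
    (hA : (Matrix.vecMulVec ψ (star ψ) - ρ₂).IsHermitian)
    (lamPlus : ℝ) (v : Fin n → ℂ) (hv : star v ⬝ᵥ v = 1)
    (heig : (Matrix.vecMulVec ψ (star ψ) - ρ₂).mulVec v = (lamPlus : ℂ) • v)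
    (hmax : ∀ i, hA.eigenvalues i ≤ lamPlus) :
    (Matrix.vecMulVec v (star v) * (Matrix.vecMulVec ψ (star ψ) - ρ₂)).trace =
        (lamPlus : ℂ) ∧
      lamPlus = (1 / 2) * ∑ i, |hA.eigenvalues i| := by
  classical
  set A := Matrix.vecMulVec ψ (star ψ) - ρ₂ with hAdef
  -- Part 1
  have h1 : (Matrix.vecMulVec v (star v) * A).trace = (lamPlus : ℂ) := by
    rw [trace_vecMulVec_mul, heig, dotProduct_smul, hv, smul_eq_mul, mul_one]
  refine ⟨h1, ?_⟩
  -- trace A = 0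
  have htrA : A.trace = 0 := by
    have h2 : (Matrix.vecMulVec ψ (star ψ)).trace = 1 := by
      have h2' : (Matrix.vecMulVec ψ (star ψ)).trace = ψ ⬝ᵥ star ψ := by
        simp [Matrix.trace, Matrix.diag, Matrix.vecMulVec_apply, dotProduct]
      rw [h2', dotProduct_comm, hψ]
    rw [hAdef, Matrix.trace_sub, h2, htr, sub_self]
  -- sum of eigenvalues is zero
  have hsum : ∑ i, hA.eigenvalues i = 0 := by
    have h3 : A.trace = ∑ i, (hA.eigenvalues i : ℂ) := by
      exact hA.trace_eq_sum_eigenvalues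
    rw [htrA] at h3
    exact_mod_cast h3.symm
  -- lamPlus is an eigenvalue
  have hvne : v ≠ 0 := by
    intro h
    rw [h] at hv
    simp [dotProduct] at hv
  obtain ⟨k, hk⟩ : ∃ k, hA.eigenvalues k = lamPlus := by
    have hspecC : (lamPlus : ℂ) ∈ spectrum ℂ A := by
      rw [← AlgEquiv.spectrum_eq (Matrix.toLinAlgEquiv' (R := ℂ) (n := Fin n)) A,
        ← Module.End.hasEigenvalue_iff_mem_spectrum]
      refine Module.End.hasEigenvalue_of_hasEigenvector ⟨?_, hvne⟩
      rw [Module.End.mem_eigenspace_iff, Matrix.toLinAlgEquiv'_apply, heig]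
    have hspecR : lamPlus ∈ spectrum ℝ A := by
      rw [← spectrum.algebraMap_mem_iff ℂ] at hspecC ⊢
      exact hspecC
    rw [hA.spectrum_real_eq_range_eigenvalues] at hspecR
    obtain ⟨k, hk⟩ := hspecR
    exact ⟨k, hk⟩
  -- quadratic form of A
  have hquad : ∀ w : Fin n → ℂ, star w ⬝ᵥ (A *ᵥ w)
      = (star ψ ⬝ᵥ w) * star (star ψ ⬝ᵥ w) - star w ⬝ᵥ (ρ₂ *ᵥ w) := by
    intro w
    rw [hAdef, Matrix.sub_mulVec, dotProduct_sub, vecMulVec_mulVec',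
      dotProduct_smul, smul_eq_mul, star_dot]
  -- at most one positive eigenvalue
  have hite := orthonormal_iff_ite.mp hA.eigenvectorBasis.orthonormal
  have honepos : ∀ i j, i ≠ j → 0 < hA.eigenvalues i → 0 < hA.eigenvalues j → False := by
    intro i j hij hi hj
    set wi : Fin n → ℂ := ⇑(hA.eigenvectorBasis i) with hwi
    set wj : Fin n → ℂ := ⇑(hA.eigenvectorBasis j) with hwj
    have horth : star wi ⬝ᵥ wj = 0 := by
      have := hite i j
      rw [EuclideanSpace.inner_eq_star_dotProduct, dotProduct_comm] at this
      simpa [hij] using this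
    have hni : star wi ⬝ᵥ wi = 1 := by
      have := hite i i
      rw [EuclideanSpace.inner_eq_star_dotProduct, dotProduct_comm] at this
      simpa using this
    have hnj : star wj ⬝ᵥ wj = 1 := by
      have := hite j j
      rw [EuclideanSpace.inner_eq_star_dotProduct, dotProduct_comm] at this
      simpa using this
    have horth' : star wj ⬝ᵥ wi = 0 := by
      have := star_dot wi wj
      rw [horth, star_zero] at this
      exact this.symm
    have key : ∀ a b : ℂ, ¬(a = 0 ∧ b = 0) → (star ψ ⬝ᵥ (a • wi + b • wj)) = 0 → False := by
      intro a b hab h0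
      set w : Fin n → ℂ := a • wi + b • wj with hw
      have hAw : A *ᵥ w = ((hA.eigenvalues i : ℂ) * a) • wi + ((hA.eigenvalues j : ℂ) * b) • wj := by
        funext x
        have hwi' : (A *ᵥ wi) x = (hA.eigenvalues i • wi) x := congrFun (hA.mulVec_eigenvectorBasis i) x
        have hwj' : (A *ᵥ wj) x = (hA.eigenvalues j • wj) x := congrFun (hA.mulVec_eigenvectorBasis j) x
        simp only [hw, Matrix.mulVec_add, Matrix.mulVec_smul, Pi.add_apply, Pi.smul_apply,
          smul_eq_mul, hwi', hwj', Pi.smul_apply, Complex.real_smul]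
        ring
      have hq1 : star w ⬝ᵥ (A *ᵥ w)
          = (hA.eigenvalues i : ℂ) * (a * star a) + (hA.eigenvalues j : ℂ) * (b * star b) := by
        rw [hAw, hw]
        simp only [star_add, star_smul, add_dotProduct, dotProduct_add,
          smul_dotProduct, dotProduct_smul, hni, hnj, horth, horth',
          smul_eq_mul, mul_zero, mul_one, add_zero, zero_add]
        ring
      have hq2 := hquad w
      rw [h0] at hq2
      simp only [zero_mul, zero_sub] at hq2
      have hρw := hρ₂.dotProduct_mulVec_nonneg w
      have hρre : 0 ≤ (star w ⬝ᵥ (ρ₂ *ᵥ w)).re := by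
        rw [Complex.le_def] at hρw
        simpa using hρw.1
      have ha' : (a * star a) = (Complex.normSq a : ℂ) := by
        rw [Complex.star_def, Complex.mul_conj]
      have hb' : (b * star b) = (Complex.normSq b : ℂ) := by
        rw [Complex.star_def, Complex.mul_conj]
      have heq : ((hA.eigenvalues i * Complex.normSq a
          + hA.eigenvalues j * Complex.normSq b : ℝ) : ℂ) = -(star w ⬝ᵥ (ρ₂ *ᵥ w)) := by
        push_cast
        rw [← hq2, hq1, ha', hb']
      have hre : hA.eigenvalues i * Complex.normSq a + hA.eigenvalues j * Complex.normSq b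
          ≤ 0 := by
        have h4 := congrArg Complex.re heq
        simp only [Complex.ofReal_re, Complex.neg_re] at h4
        rw [h4]
        linarith
      have hsa : Complex.normSq a = 0 := by
        have h5 : hA.eigenvalues i * Complex.normSq a ≤ 0 := by
          nlinarith [mul_nonneg hj.le (Complex.normSq_nonneg b)]
        by_contra hcon
        have : 0 < Complex.normSq a := lt_of_le_of_ne (Complex.normSq_nonneg a) (Ne.symm hcon)
        nlinarith
      have hsb : Complex.normSq b = 0 := by
        have h5 : hA.eigenvalues j * Complex.normSq b ≤ 0 := by
          nlinarith [mul_nonneg hi.le (Complex.normSq_nonneg a)]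
        by_contra hcon
        have : 0 < Complex.normSq b := lt_of_le_of_ne (Complex.normSq_nonneg b) (Ne.symm hcon)
        nlinarith
      exact hab ⟨Complex.normSq_eq_zero.mp hsa, Complex.normSq_eq_zero.mp hsb⟩
    by_cases hci : (star ψ ⬝ᵥ wi) = 0
    · refine key 1 0 (by simp) ?_
      simp [dotProduct_add, dotProduct_smul, hci]
    · refine key (star ψ ⬝ᵥ wj) (-(star ψ ⬝ᵥ wi)) (by simp [hci]) ?_
      simp only [dotProduct_add, dotProduct_smul, smul_eq_mul]
      ring
  -- lamPlus ≥ 0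
  have hnn : 0 ≤ lamPlus := by
    by_contra hcon
    push_neg at hcon
    have : ∑ i, hA.eigenvalues i < 0 := by
      have : ∑ i, hA.eigenvalues i ≤ ∑ _i : Fin n, lamPlus :=
        Finset.sum_le_sum fun i _ => hmax i
      have hcard : ∑ _i : Fin n, lamPlus = n * lamPlus := by
        rw [Finset.sum_const, Finset.card_univ, Fintype.card_fin, nsmul_eq_mul]
      have hn1 : (1 : ℝ) ≤ n := by
        have : 0 < n := Fin.pos k
        exact_mod_cast this
      nlinarith
    rw [hsum] at this
    exact lt_irrefl _ this
  -- S = lamPlus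
  have hS : ∑ i, max (hA.eigenvalues i) 0 = lamPlus := by
    rcases eq_or_lt_of_le hnn with h0 | h0
    · rw [← h0]
      rw [Finset.sum_eq_zero]
      intro i _
      rw [max_eq_right]
      have := hmax i
      rw [← h0] at this
      exact this
    · rw [Finset.sum_eq_single_of_mem k (Finset.mem_univ k)]
      · rw [hk, max_eq_left hnn]
      · intro i _ hik
        rw [max_eq_right]
        by_contra hcon
        push_neg at hcon
        exact honepos i k hik hcon (hk ▸ h0)
  -- conclude
  have habs : ∑ i, |hA.eigenvalues i| = 2 * lamPlus := by
    calc ∑ i, |hA.eigenvalues i| = ∑ i, (2 * max (hA.eigenvalues i) 0 - hA.eigenvalues i) :=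
          Finset.sum_congr rfl fun i _ => abs_eq_two_max_sub _
      _ = 2 * (∑ i, max (hA.eigenvalues i) 0) - ∑ i, hA.eigenvalues i := by
          rw [Finset.sum_sub_distrib, Finset.mul_sum]
      _ = 2 * lamPlus := by rw [hS, hsum]; ring
  rw [habs]
  ring
end
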